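/- For any θ₀ ∈ ℝ^d, if X ~ N_d(θ₀, I_d) then E[X · tanh(θ₀ᵀX)] = θ₀. -/

import Mathlib

open MeasureTheory Real
open scoped RealInnerProductSpace

/-- The multivariate Gaussian measure `N_d(μ, I_d)` on `ℝ^d`, defined via its density
with respect to Lebesgue measure. -/
noncomputable def gaussian (d : ℕ) (μ : EuclideanSpace ℝ (Fin d)) :
    Measure (EuclideanSpace ℝ (Fin d)) :=
  volume.withDensity
    (fun x => ENNReal.ofReal ((2 * Real.pi) ^ (-(d : ℝ) / 2) * Real.exp (-‖x - μ‖ ^ 2 / 2)))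


variable {d : ℕ}


lemma abs_tanh_le_one (t : ℝ) : |Real.tanh t| ≤ 1 := by
  rw [Real.tanh_eq_sinh_div_cosh, abs_div, abs_of_pos (Real.cosh_pos t),
    div_le_one (Real.cosh_pos t), Real.sinh_eq, Real.cosh_eq, abs_div]
  rw [abs_of_pos (by norm_num : (0:ℝ) < 2)]
  gcongr
  have h1 := Real.exp_pos t
  have h2 := Real.exp_pos (-t)
  rw [abs_le]; constructor <;> nlinarith

lemma integrable_gauss (b : ℝ) (hb : 0 < b) :
    Integrable (fun v : EuclideanSpace ℝ (Fin d) => Real.exp (-b * ‖v‖^2)) := by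
  have h := (GaussianFourier.integrable_cexp_neg_mul_sq_norm_add (V := EuclideanSpace ℝ (Fin d))
    (b := (b : ℂ)) (by simpa using hb) 0 0).re
  refine h.congr ?_
  filter_upwards with v
  simp [← Complex.ofReal_pow, ← Complex.ofReal_neg, ← Complex.ofReal_mul, Complex.exp_ofReal_re]

lemma mass_integral (d : ℕ) :
    ∫ v : EuclideanSpace ℝ (Fin d), Real.exp (-‖v‖^2 / 2)
      = (2 * Real.pi) ^ ((d : ℝ) / 2) := by
  have h := GaussianFourier.integral_rexp_neg_mul_sq_norm
    (V := EuclideanSpace ℝ (Fin d)) (b := 1/2) (by norm_num)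
  simp only [finrank_euclideanSpace_fin] at h
  rw [show (Real.pi / (1/2)) = 2 * Real.pi by ring] at h
  rw [← h]
  congr 1 with v
  ring_nf

lemma integrable_gauss_smul (b : ℝ) (hb : 0 < b) :
    Integrable (fun v : EuclideanSpace ℝ (Fin d) => Real.exp (-b * ‖v‖^2) • v) := by
  have hcont : Continuous (fun v : EuclideanSpace ℝ (Fin d) => Real.exp (-b * ‖v‖^2) • v) := by
    fun_prop
  refine ((integrable_gauss (b/2) (by positivity)).const_mul (Real.exp (1/(2*b)))).mono'
    hcont.aestronglyMeasurable ?_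
  filter_upwards with v
  rw [norm_smul, Real.norm_eq_abs, abs_of_pos (Real.exp_pos _), ← Real.exp_add]
  calc Real.exp (-b * ‖v‖^2) * ‖v‖ ≤ Real.exp (-b * ‖v‖^2) * Real.exp (‖v‖) := by
        exact mul_le_mul_of_nonneg_left
          ((Real.add_one_le_exp ‖v‖).trans' (by linarith [norm_nonneg v]))
          (Real.exp_pos _).le
    _ = Real.exp (-b * ‖v‖^2 + ‖v‖) := (Real.exp_add _ _).symm
    _ ≤ Real.exp (1/(2*b) + -(b/2) * ‖v‖^2) := by
        apply Real.exp_le_exp.2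
        have h2b : (0:ℝ) < 2*b := by positivity
        rw [← sub_nonneg]
        have heq : 1/(2*b) + -(b/2)*‖v‖^2 - (-b*‖v‖^2 + ‖v‖) = (b*‖v‖-1)^2 / (2*b) := by
          field_simp; ring
        rw [heq]; positivity

noncomputable def Cd (d : ℕ) : ℝ := (2 * Real.pi) ^ (-(d : ℝ) / 2)

lemma Cd_pos (d : ℕ) : 0 < Cd d := Real.rpow_pos_of_pos (by positivity) _

lemma total_mass (d : ℕ) (μ : EuclideanSpace ℝ (Fin d)) :
    ∫ x : EuclideanSpace ℝ (Fin d), Cd d * Real.exp (-‖x - μ‖^2 / 2) = 1 := by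
  have h := integral_sub_right_eq_self (μ := (volume : Measure (EuclideanSpace ℝ (Fin d))))
    (fun y => Cd d * Real.exp (-‖y‖^2 / 2)) μ
  rw [h, integral_const_mul, mass_integral, Cd, ← Real.rpow_add (by positivity),
    show (-(d:ℝ)/2 + (d:ℝ)/2) = 0 by ring, Real.rpow_zero]

lemma integrable_gauss_density (d : ℕ) (μ : EuclideanSpace ℝ (Fin d)) :
    Integrable (fun x : EuclideanSpace ℝ (Fin d) => Cd d * Real.exp (-‖x - μ‖^2 / 2)) := by
  have h : Integrable (fun y : EuclideanSpace ℝ (Fin d) => Cd d * Real.exp (-‖y‖^2 / 2)) := by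
    have := (integrable_gauss (d := d) (1/2) (by norm_num)).const_mul (Cd d)
    refine this.congr ?_
    filter_upwards with y
    ring_nf
  exact h.comp_sub_right μ

lemma integrable_gauss_density_smul (d : ℕ) (μ : EuclideanSpace ℝ (Fin d)) :
    Integrable (fun x : EuclideanSpace ℝ (Fin d) => (Cd d * Real.exp (-‖x - μ‖^2 / 2)) • x) := by
  have h : Integrable (fun y : EuclideanSpace ℝ (Fin d) =>
      (Cd d * Real.exp (-‖y‖^2 / 2)) • (y + μ)) := by
    have h1 : Integrable (fun y : EuclideanSpace ℝ (Fin d) =>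
        (Cd d * Real.exp (-‖y‖^2 / 2)) • y) := by
      have := ((integrable_gauss_smul (d := d) (1/2) (by norm_num))).smul (Cd d)
      refine this.congr ?_
      filter_upwards with y
      simp only [Pi.smul_apply, smul_smul]
      ring_nf
    have h2 := (integrable_gauss_density d 0).smul_const μ
    simp only [sub_zero] at h2
    exact (h1.add h2).congr (by filter_upwards with y; rw [Pi.add_apply, smul_add])
  have := h.comp_sub_right μ
  refine this.congr ?_
  filter_upwards with x
  simp

lemma zero_first_moment (d : ℕ) :
    ∫ y : EuclideanSpace ℝ (Fin d), (Cd d * Real.exp (-‖y‖^2 / 2)) • y = 0 := by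
  have h := integral_neg_eq_self
    (fun y : EuclideanSpace ℝ (Fin d) => (Cd d * Real.exp (-‖y‖^2 / 2)) • y) volume
  simp only [norm_neg, smul_neg] at h
  rw [integral_neg] at h
  have h2 : (2:ℝ) • (∫ y : EuclideanSpace ℝ (Fin d), (Cd d * Real.exp (-‖y‖^2 / 2)) • y) = 0 := by
    rw [two_smul]; nth_rewrite 1 [← h]; exact neg_add_cancel _
  exact (smul_eq_zero.mp h2).resolve_left two_ne_zero

lemma mean_integral (d : ℕ) (μ : EuclideanSpace ℝ (Fin d)) :
    ∫ x : EuclideanSpace ℝ (Fin d), (Cd d * Real.exp (-‖x - μ‖^2 / 2)) • x = μ := by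
  have h := integral_add_right_eq_self (μ := (volume : Measure (EuclideanSpace ℝ (Fin d))))
    (fun x => (Cd d * Real.exp (-‖x - μ‖^2 / 2)) • x) μ
  rw [← h]
  have heq : ∀ x : EuclideanSpace ℝ (Fin d),
      (Cd d * Real.exp (-‖x + μ - μ‖^2 / 2)) • (x + μ)
        = (Cd d * Real.exp (-‖x‖^2 / 2)) • x + (Cd d * Real.exp (-‖x‖^2 / 2)) • μ := by
    intro x; rw [add_sub_cancel_right, smul_add]
  rw [integral_congr_ae (Filter.Eventually.of_forall heq)]
  have h1 : Integrable (fun y : EuclideanSpace ℝ (Fin d) =>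
      (Cd d * Real.exp (-‖y‖^2 / 2)) • y) := by
    have := integrable_gauss_density_smul d 0
    simpa using this
  have h2 : Integrable (fun y : EuclideanSpace ℝ (Fin d) =>
      (Cd d * Real.exp (-‖y‖^2 / 2)) • μ) := by
    have := (integrable_gauss_density d 0).smul_const μ
    simpa using this
  rw [integral_add h1 h2, zero_first_moment, integral_smul_const]
  have h3 : (∫ y : EuclideanSpace ℝ (Fin d), Cd d * Real.exp (-‖y‖^2 / 2)) = 1 := by
    have := total_mass d 0
    simpa using this
  rw [h3, zero_add, one_smul]

/-- if `X ~ N_d(θ₀, I_d)` then `E[X · tanh(θ₀ᵀX)] = θ₀`. -/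
theorem integral_tanh_smul_gaussian (d : ℕ) (θ₀ : EuclideanSpace ℝ (Fin d)) :
    ∫ x, Real.tanh ⟪θ₀, x⟫ • x ∂(gaussian d θ₀) = θ₀ := by
  set A : EuclideanSpace ℝ (Fin d) → EuclideanSpace ℝ (Fin d) :=
    fun x => (Cd d * Real.exp (-‖x - θ₀‖^2/2) * Real.tanh ⟪θ₀, x⟫) • x with hA
  set B : EuclideanSpace ℝ (Fin d) → EuclideanSpace ℝ (Fin d) :=
    fun x => (Cd d * Real.exp (-‖x - -θ₀‖^2/2) * Real.tanh ⟪θ₀, x⟫) • x with hB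
  have h0 : ∫ x, Real.tanh ⟪θ₀, x⟫ • x ∂(gaussian d θ₀) = ∫ x, A x := by
    rw [gaussian]
    have hmeas : Measurable fun x : EuclideanSpace ℝ (Fin d) =>
        ((2 * Real.pi) ^ (-(d : ℝ) / 2) * Real.exp (-‖x - θ₀‖ ^ 2 / 2)).toNNReal := by
      fun_prop
    rw [show (fun x : EuclideanSpace ℝ (Fin d) =>
        ENNReal.ofReal ((2 * Real.pi) ^ (-(d : ℝ) / 2) * Real.exp (-‖x - θ₀‖ ^ 2 / 2)))
      = fun x => ((((2 * Real.pi) ^ (-(d : ℝ) / 2) * Real.exp (-‖x - θ₀‖ ^ 2 / 2)).toNNReal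
        : NNReal) : ENNReal) from rfl,
      integral_withDensity_eq_integral_smul hmeas]
    refine integral_congr_ae (Filter.Eventually.of_forall fun x => ?_)
    simp only [NNReal.smul_def, Real.coe_toNNReal _ (by positivity : (0:ℝ) ≤
      (2 * Real.pi) ^ (-(d : ℝ) / 2) * Real.exp (-‖x - θ₀‖ ^ 2 / 2)), smul_smul]
    rfl
  rw [h0]
  have hDint := integrable_gauss_density_smul d θ₀
  have hEint := integrable_gauss_density_smul d (-θ₀)
  have habs : ∀ (μ : EuclideanSpace ℝ (Fin d)) x,
      ‖(Cd d * Real.exp (-‖x - μ‖^2/2) * Real.tanh ⟪θ₀, x⟫) • x‖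
        ≤ ‖(Cd d * Real.exp (-‖x - μ‖^2/2)) • x‖ := by
    intro μ x
    rw [norm_smul, norm_smul, Real.norm_eq_abs, Real.norm_eq_abs, abs_mul]
    have h1 : 0 ≤ Cd d * Real.exp (-‖x - μ‖^2/2) :=
      mul_nonneg (Cd_pos d).le (Real.exp_pos _).le
    gcongr
    exact mul_le_of_le_one_right (abs_nonneg _) (abs_tanh_le_one _)
  have hmeasA : ∀ (μ : EuclideanSpace ℝ (Fin d)), AEStronglyMeasurable
      (fun x : EuclideanSpace ℝ (Fin d) =>
        (Cd d * Real.exp (-‖x - μ‖^2/2) * Real.tanh ⟪θ₀, x⟫) • x) volume := by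
    intro μ
    apply Continuous.aestronglyMeasurable
    have hc : Continuous fun x : EuclideanSpace ℝ (Fin d) =>
        Cd d * Real.exp (-‖x - μ‖^2/2) * Real.tanh ⟪θ₀, x⟫ := by
      apply Continuous.mul
      · fun_prop
      · have htanh : Continuous Real.tanh := by
          have he : Real.tanh = fun t => Real.sinh t / Real.cosh t :=
            funext Real.tanh_eq_sinh_div_cosh
          rw [he]
          exact Real.continuous_sinh.div Real.continuous_cosh fun t => (Real.cosh_pos t).ne'
        exact htanh.comp (continuous_const.inner continuous_id)
    exact hc.smul continuous_id
  have hAint : Integrable A := by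
    refine hDint.norm.mono' (hmeasA θ₀) ?_
    filter_upwards with x using habs θ₀ x
  have hBint : Integrable B := by
    refine hEint.norm.mono' (hmeasA (-θ₀)) ?_
    filter_upwards with x using habs (-θ₀) x
  have hsym : ∫ x, A x = ∫ x, B x := by
    calc ∫ x, A x = ∫ x, B (-x) := by
          refine integral_congr_ae (Filter.Eventually.of_forall fun x => ?_)
          show (Cd d * Real.exp (-‖x - θ₀‖^2/2) * Real.tanh ⟪θ₀, x⟫) • x
            = (Cd d * Real.exp (-‖-x - -θ₀‖^2/2) * Real.tanh ⟪θ₀, -x⟫) • (-x)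
          have hnn : -x - -θ₀ = -(x - θ₀) := by abel
          rw [hnn, norm_neg, inner_neg_right, Real.tanh_neg, mul_neg, neg_smul, smul_neg,
            neg_neg]
      _ = ∫ x, B x := integral_neg_eq_self B volume
  have hkey : ∀ x, A x + B x
      = (Cd d * Real.exp (-‖x - θ₀‖^2/2)) • x - (Cd d * Real.exp (-‖x - -θ₀‖^2/2)) • x := by
    intro x
    rw [hA, hB, ← add_smul, ← sub_smul]
    congr 1
    have hsub : ‖x - θ₀‖^2 = ‖x‖^2 - 2*⟪x,θ₀⟫ + ‖θ₀‖^2 := norm_sub_sq_real x θ₀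
    have hadd : ‖x - -θ₀‖^2 = ‖x‖^2 + 2*⟪x,θ₀⟫ + ‖θ₀‖^2 := by
      rw [sub_neg_eq_add]; exact norm_add_sq_real x θ₀
    have hts : ⟪x,θ₀⟫ = ⟪θ₀,x⟫ := real_inner_comm θ₀ x
    set t := ⟪θ₀,x⟫ with ht
    set q := Real.exp (-(‖x‖^2 + ‖θ₀‖^2)/2) with hq
    have h1 : Real.exp (-‖x-θ₀‖^2/2) = q * Real.exp t := by
      rw [hq, ← Real.exp_add]; congr 1; rw [hsub, hts]; ring
    have h2 : Real.exp (-‖x - -θ₀‖^2/2) = q * Real.exp (-t) := by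
      rw [hq, ← Real.exp_add]; congr 1; rw [hadd, hts]; ring
    rw [h1, h2, Real.tanh_eq_sinh_div_cosh, Real.sinh_eq, Real.cosh_eq]
    have hc : Real.exp t + Real.exp (-t) ≠ 0 := by positivity
    field_simp
  have hsum : (∫ x, A x) + (∫ x, B x) = θ₀ - -θ₀ := by
    rw [← integral_add hAint hBint,
      integral_congr_ae (Filter.Eventually.of_forall hkey),
      integral_sub hDint hEint, mean_integral, mean_integral]
  rw [← hsym, sub_neg_eq_add] at hsum
  have h2 : (2:ℝ) • (∫ x, A x) = (2:ℝ) • θ₀ := by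
    rw [two_smul, two_smul]; exact hsum
  exact smul_right_injective _ (two_ne_zero) h2
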